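/- Let γ ∈ (0,1), n ≥ 1, q ∈ [0,1), and τ ≥ 0. Let X = (X_1, …, X_n) be a standard Gaussian vector with law N(0, I_n) on a probability space (Ω, P) and let Δ = (Δ_1, …, Δ_n) be a random vector independent of X with |Δ_i| ≤ q almost surely for every i. Then P(|∑_{i=1}^n (1 + Δ_i + X_i)| > √n · λ_γ(τ√n)) ≥ 2 − Φ(λ_γ(τ√n) − (1 − q)√n) − Φ(λ_γ(τ√n) + (1 − q)√n). (Lower bound on the detection probability of the RDT decision.) -/

import Mathlib

open MeasureTheory ProbabilityTheory Real Filter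

open scoped NNReal ENNReal

/-- The cumulative distribution function `Φ` of the standard normal law `N(0,1)`. -/
noncomputable def Phi (x : ℝ) : ℝ := ((gaussianReal 0 1) (Set.Iic x)).toReal

/-- The inverse `Φ⁻¹` of the standard normal cdf (on `(0,1)`). -/
noncomputable def PhiInv (y : ℝ) : ℝ := Function.invFun Phi y

lemma pdf_prod_eq (a b : ℝ≥0) (ha : a ≠ 0) (hb : b ≠ 0) (y x : ℝ) :
    gaussianPDFReal 0 a x * gaussianPDFReal 0 b (y - x) =
      gaussianPDFReal 0 (a + b) y * gaussianPDFReal ((a : ℝ) * y / (a + b)) (a * b / (a + b)) x := by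
  have hA : (0:ℝ) < a := lt_of_le_of_ne a.coe_nonneg (by exact_mod_cast ha.symm)
  have hB : (0:ℝ) < b := lt_of_le_of_ne b.coe_nonneg (by exact_mod_cast hb.symm)
  have hAB : (0:ℝ) < (a:ℝ) + b := by linarith
  have hs : ((a * b / (a + b) : ℝ≥0) : ℝ) = (a:ℝ) * b / ((a:ℝ) + b) := by push_cast; ring
  simp only [gaussianPDFReal, NNReal.coe_add, hs, sub_zero]
  rw [show (√(2 * π * (a:ℝ)))⁻¹ * rexp (-x ^ 2 / (2 * a)) *
      ((√(2 * π * (b:ℝ)))⁻¹ * rexp (-(y - x) ^ 2 / (2 * b))) =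
      ((√(2 * π * (a:ℝ)))⁻¹ * (√(2 * π * (b:ℝ)))⁻¹) *
      (rexp (-x ^ 2 / (2 * a)) * rexp (-(y - x) ^ 2 / (2 * b))) by ring]
  rw [show (√(2 * π * ((a:ℝ) + b)))⁻¹ * rexp (-y ^ 2 / (2 * ((a:ℝ) + b))) *
      ((√(2 * π * ((a:ℝ) * b / ((a:ℝ) + b))))⁻¹ *
        rexp (-(x - (a:ℝ) * y / ((a:ℝ) + b)) ^ 2 / (2 * ((a:ℝ) * b / ((a:ℝ) + b))))) =
      ((√(2 * π * ((a:ℝ) + b)))⁻¹ * (√(2 * π * ((a:ℝ) * b / ((a:ℝ) + b))))⁻¹) *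
      (rexp (-y ^ 2 / (2 * ((a:ℝ) + b))) *
        rexp (-(x - (a:ℝ) * y / ((a:ℝ) + b)) ^ 2 / (2 * ((a:ℝ) * b / ((a:ℝ) + b))))) by ring]
  congr 1
  · rw [← Real.sqrt_inv, ← Real.sqrt_inv, ← Real.sqrt_mul (by positivity),
      ← Real.sqrt_inv, ← Real.sqrt_inv, ← Real.sqrt_mul (by positivity)]
    congr 1
    field_simp
  · rw [← Real.exp_add, ← Real.exp_add]
    congr 1
    field_simp
    ring

lemma conv_pdf (a b : ℝ≥0) (ha : a ≠ 0) (hb : b ≠ 0) (y : ℝ) :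
    ∫ x, gaussianPDFReal 0 a x * gaussianPDFReal 0 b (y - x) = gaussianPDFReal 0 (a + b) y := by
  simp only [pdf_prod_eq a b ha hb y]
  rw [MeasureTheory.integral_const_mul, integral_gaussianPDFReal_eq_one _ (by
    intro h
    rw [div_eq_zero_iff] at h
    rcases h with h | h
    · rcases mul_eq_zero.1 h with h | h <;> [exact ha h; exact hb h]
    · exact absurd h (by simp [ha, hb])), mul_one]

lemma integrable_slice (a b : ℝ≥0) (ha : a ≠ 0) (hb : b ≠ 0) (y : ℝ) :
    Integrable (fun x => gaussianPDFReal 0 a x * gaussianPDFReal 0 b (y - x)) := by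
  simp only [pdf_prod_eq a b ha hb y]
  exact (integrable_gaussianPDFReal _ _).const_mul _

lemma gauss_conv (a b : ℝ≥0) :
    Measure.map (fun p : ℝ × ℝ => p.1 + p.2) ((gaussianReal 0 a).prod (gaussianReal 0 b)) =
      gaussianReal 0 (a + b) := by
  rcases eq_or_ne b 0 with rfl | hb
  · rw [gaussianReal_zero_var, Measure.prod_dirac, Measure.map_map (by fun_prop) (by fun_prop)]
    simp [Function.comp_def]
  rcases eq_or_ne a 0 with rfl | ha
  · rw [gaussianReal_zero_var, Measure.dirac_prod, Measure.map_map (by fun_prop) (by fun_prop)]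
    simp [Function.comp_def]
  have hab : a + b ≠ 0 := by simp [ha, hb]
  ext s hs
  rw [Measure.map_apply (by fun_prop) hs, Measure.prod_apply (hs.preimage (by fun_prop))]
  have h1 : ∀ x : ℝ, (gaussianReal 0 b) (Prod.mk x ⁻¹' ((fun p : ℝ × ℝ => p.1 + p.2) ⁻¹' s))
      = ∫⁻ y, s.indicator (fun _ => (1:ℝ≥0∞)) y * gaussianPDF 0 b (y - x) := by
    intro x
    have hset : (Prod.mk x ⁻¹' ((fun p : ℝ × ℝ => p.1 + p.2) ⁻¹' s)) = (fun y => x + y) ⁻¹' s := rfl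
    rw [hset, gaussianReal_apply _ hb,
      ← lintegral_indicator (measurableSet_preimage (by fun_prop) hs) _,
      ← MeasureTheory.lintegral_add_right_eq_self
        (fun y => s.indicator (fun _ => (1:ℝ≥0∞)) y * gaussianPDF 0 b (y - x)) x]
    congr 1 with y
    simp only [add_sub_cancel_right]
    by_cases h : x + y ∈ s
    · rw [Set.indicator_of_mem (show y ∈ (fun y => x + y) ⁻¹' s from h),
        Set.indicator_of_mem (show y + x ∈ s by rwa [add_comm]), one_mul]
    · rw [Set.indicator_of_notMem (show y ∉ (fun y => x + y) ⁻¹' s from h),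
        Set.indicator_of_notMem (show y + x ∉ s by rwa [add_comm]), zero_mul]
  simp_rw [h1]
  have hmeas_ind : Measurable (s.indicator (fun _ => (1:ℝ≥0∞))) := measurable_const.indicator hs
  have hmeas_in : ∀ x : ℝ, Measurable fun y => s.indicator (fun _ => (1:ℝ≥0∞)) y * gaussianPDF 0 b (y - x) :=
    fun x => hmeas_ind.mul ((measurable_gaussianPDF 0 b).comp (by fun_prop))
  rw [gaussianReal_of_var_ne_zero _ ha, lintegral_withDensity_eq_lintegral_mul _
    (measurable_gaussianPDF 0 a) (by
      apply Measurable.lintegral_prod_right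
        (f := fun x y => s.indicator (fun _ => (1:ℝ≥0∞)) y * gaussianPDF 0 b (y - x))
      exact (hmeas_ind.comp measurable_snd).mul ((measurable_gaussianPDF 0 b).comp (by fun_prop)))]
  simp only [Pi.mul_apply]
  have hpull : ∀ x : ℝ, gaussianPDF 0 a x * ∫⁻ y, s.indicator (fun _ => (1:ℝ≥0∞)) y * gaussianPDF 0 b (y - x)
      = ∫⁻ y, gaussianPDF 0 a x * (s.indicator (fun _ => (1:ℝ≥0∞)) y * gaussianPDF 0 b (y - x)) :=
    fun x => (lintegral_const_mul _ (hmeas_in x)).symm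
  simp_rw [hpull]
  rw [MeasureTheory.lintegral_lintegral_swap (by
      apply Measurable.aemeasurable
      apply Measurable.mul
      · exact (measurable_gaussianPDF 0 a).comp measurable_fst
      · exact (hmeas_ind.comp measurable_snd).mul
          ((measurable_gaussianPDF 0 b).comp (by fun_prop)))]
  have h2 : ∀ y : ℝ, ∫⁻ x, gaussianPDF 0 a x * (s.indicator (fun _ => (1:ℝ≥0∞)) y * gaussianPDF 0 b (y - x))
      = s.indicator (fun _ => (1:ℝ≥0∞)) y * gaussianPDF 0 (a + b) y := by
    intro y
    have : ∀ x : ℝ, gaussianPDF 0 a x * (s.indicator (fun _ => (1:ℝ≥0∞)) y * gaussianPDF 0 b (y - x))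
        = s.indicator (fun _ => (1:ℝ≥0∞)) y * ENNReal.ofReal (gaussianPDFReal 0 a x * gaussianPDFReal 0 b (y - x)) := by
      intro x
      rw [ENNReal.ofReal_mul (gaussianPDFReal_nonneg 0 a x)]
      simp only [gaussianPDF]
      ring
    simp_rw [this]
    rw [lintegral_const_mul _ (by
      exact ENNReal.measurable_ofReal.comp ((measurable_gaussianPDFReal 0 a).mul
        ((measurable_gaussianPDFReal 0 b).comp (by fun_prop))))]
    congr 1
    rw [← MeasureTheory.ofReal_integral_eq_lintegral_ofReal (integrable_slice a b ha hb y)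
      (Filter.Eventually.of_forall fun x =>
        mul_nonneg (gaussianPDFReal_nonneg 0 a x) (gaussianPDFReal_nonneg 0 b (y - x))),
      conv_pdf a b ha hb y]
    rfl
  simp_rw [h2]
  have : ∀ y : ℝ, s.indicator (fun _ => (1:ℝ≥0∞)) y * gaussianPDF 0 (a + b) y
      = s.indicator (gaussianPDF 0 (a+b)) y := by
    intro y
    by_cases h : y ∈ s <;> simp [h]
  simp_rw [this]
  rw [lintegral_indicator hs, ← gaussianReal_apply _ hab]

lemma sum_iid_gauss {Ω : Type*} [MeasurableSpace Ω] (P : Measure Ω) [IsProbabilityMeasure P]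
    {n : ℕ} (X : Fin n → Ω → ℝ) (hmeas : ∀ i, Measurable (X i))
    (hindep : iIndepFun X P)
    (hdist : ∀ i, Measure.map (X i) P = gaussianReal 0 1)
    (s : Finset (Fin n)) :
    Measure.map (fun ω => ∑ i ∈ s, X i ω) P = gaussianReal 0 (s.card : ℝ≥0) := by
  induction s using Finset.induction with
  | empty =>
    simp only [Finset.sum_empty, Finset.card_empty, Nat.cast_zero, gaussianReal_zero_var]
    rw [Measure.map_const]
    simp
  | @insert i s hi ih =>
    have hU : Measurable (fun ω => ∑ j ∈ s, X j ω) := by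
      apply Finset.measurable_sum
      exact fun j _ => hmeas j
    have hInd : IndepFun (fun ω => ∑ j ∈ s, X j ω) (X i) P := by
      have h := hindep.indepFun_finsetSum_of_notMem hmeas hi
      have he : (fun ω => ∑ j ∈ s, X j ω) = ∑ j ∈ s, X j := by
        funext ω; simp [Finset.sum_apply]
      rw [he]; exact h
    have hmap : Measure.map (fun ω => ((∑ j ∈ s, X j ω), X i ω)) P
        = (gaussianReal 0 (s.card : ℝ≥0)).prod (gaussianReal 0 1) := by
      rw [← ih, ← hdist i]
      exact ((indepFun_iff_map_prod_eq_prod_map_map hU.aemeasurable (hmeas i).aemeasurable).1 hInd)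
    have : (fun ω => ∑ j ∈ insert i s, X j ω)
        = (fun p : ℝ × ℝ => p.1 + p.2) ∘ (fun ω => ((∑ j ∈ s, X j ω), X i ω)) := by
      funext ω
      simp [Finset.sum_insert hi, Function.comp, add_comm]
    rw [this, ← Measure.map_map (by fun_prop) (by fun_prop), hmap, gauss_conv,
      Finset.card_insert_of_notMem hi]
    congr 1
    push_cast
    ring

lemma gauss_ne_top (s : Set ℝ) : (gaussianReal 0 1) s ≠ ⊤ := measure_ne_top _ _

lemma gauss_Iic (x : ℝ) : (gaussianReal 0 1) (Set.Iic x) = ENNReal.ofReal (Phi x) :=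
  (ENNReal.ofReal_toReal (gauss_ne_top _)).symm

lemma Phi_nonneg (x : ℝ) : 0 ≤ Phi x := ENNReal.toReal_nonneg

lemma Phi_le_one (x : ℝ) : Phi x ≤ 1 := by
  have h := measure_mono (Set.subset_univ (Set.Iic x)) (μ := gaussianReal 0 1)
  rw [measure_univ] at h
  have := ENNReal.toReal_mono (by simp) h
  simpa [Phi] using this

lemma Phi_mono {x y : ℝ} (h : x ≤ y) : Phi x ≤ Phi y :=
  ENNReal.toReal_mono (gauss_ne_top _) (measure_mono (Set.Iic_subset_Iic.2 h))

lemma gauss_singleton (x : ℝ) : (gaussianReal 0 1) {x} = 0 := by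
  rw [gaussianReal_apply _ one_ne_zero]
  exact setLIntegral_measure_zero _ _ (measure_singleton x)

lemma gauss_Iio (x : ℝ) : (gaussianReal 0 1) (Set.Iio x) = ENNReal.ofReal (Phi x) := by
  rw [← gauss_Iic, ← Set.Iio_union_right, measure_union (by simp) (measurableSet_singleton x),
    gauss_singleton, add_zero]

lemma gauss_Ioi (x : ℝ) : (gaussianReal 0 1) (Set.Ioi x) = ENNReal.ofReal (1 - Phi x) := by
  have h := measure_compl (measurableSet_Iic (a := x)) (gauss_ne_top _) (μ := gaussianReal 0 1)
  rw [Set.compl_Iic, measure_univ, gauss_Iic] at h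
  rw [h, ← ENNReal.ofReal_one, ← ENNReal.ofReal_sub _ (Phi_nonneg x)]

lemma Phi_neg (x : ℝ) : Phi (-x) = 1 - Phi x := by
  have hmap := gaussianReal_map_const_mul (μ := 0) (v := 1) (-1)
  have h1 : (⟨(-1:ℝ)^2, sq_nonneg _⟩ : ℝ≥0) * 1 = 1 := by
    ext; norm_num
  rw [mul_zero] at hmap
  replace hmap : Measure.map (fun x : ℝ => -1 * x) (gaussianReal 0 1) = gaussianReal 0 1 := by
    convert hmap using 2; ext; simp
  have : (gaussianReal 0 1) (Set.Iic (-x)) = (gaussianReal 0 1) (Set.Ici x) := by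
    conv_lhs => rw [← hmap]
    rw [Measure.map_apply (by fun_prop) measurableSet_Iic]
    congr 1
    ext y
    simp only [Set.mem_preimage, Set.mem_Iic, Set.mem_Ici]
    constructor <;> intro h <;> linarith
  have h2 : (gaussianReal 0 1) (Set.Ici x) = ENNReal.ofReal (1 - Phi x) := by
    rw [← Set.Ioi_union_left, measure_union (by simp) (measurableSet_singleton x),
      gauss_singleton, add_zero, gauss_Ioi]
  have h3 := gauss_Iic (-x)
  rw [this, h2] at h3
  have := congrArg ENNReal.toReal h3
  rw [ENNReal.toReal_ofReal (by linarith [Phi_le_one x]),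
    ENNReal.toReal_ofReal (Phi_nonneg _)] at this
  exact this.symm

lemma Phi_diff_eq (u v : ℝ) (h : u ≤ v) :
    Phi v - Phi u = ∫ x in u..v, gaussianPDFReal 0 1 x := by
  have hu : Set.Iic u ∪ Set.Ioc u v = Set.Iic v := Set.Iic_union_Ioc_eq_Iic h
  have hd : Disjoint (Set.Iic u) (Set.Ioc u v) := Set.Iic_disjoint_Ioc le_rfl
  have hμ : (gaussianReal 0 1) (Set.Iic v)
      = (gaussianReal 0 1) (Set.Iic u) + (gaussianReal 0 1) (Set.Ioc u v) := by
    rw [← hu, measure_union hd measurableSet_Ioc]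
  have happ : (gaussianReal 0 1) (Set.Ioc u v)
      = ENNReal.ofReal (∫ x in Set.Ioc u v, gaussianPDFReal 0 1 x) :=
    gaussianReal_apply_eq_integral _ one_ne_zero _
  have := congrArg ENNReal.toReal hμ
  rw [ENNReal.toReal_add (gauss_ne_top _) (gauss_ne_top _), happ,
    ENNReal.toReal_ofReal (setIntegral_nonneg measurableSet_Ioc
      (fun x _ => gaussianPDFReal_nonneg 0 1 x))] at this
  rw [intervalIntegral.integral_of_le h]
  simp only [Phi]
  linarith [this]

lemma key_phi_ineq {lam A a : ℝ} (hlam : 0 ≤ lam) (hA : 0 ≤ A) (hAa : A ≤ a) :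
    Phi (lam - a) + Phi (lam + a) ≤ Phi (lam - A) + Phi (lam + A) := by
  have h1 : Phi (lam + a) - Phi (lam + A) = ∫ x in (lam + A)..(lam + a), gaussianPDFReal 0 1 x :=
    Phi_diff_eq _ _ (by linarith)
  have h2 : Phi (lam - A) - Phi (lam - a) = ∫ x in (lam - a)..(lam - A), gaussianPDFReal 0 1 x :=
    Phi_diff_eq _ _ (by linarith)
  have h3 : ∫ x in (lam - a)..(lam - A), gaussianPDFReal 0 1 x
      = ∫ x in (lam + A)..(lam + a), gaussianPDFReal 0 1 (2 * lam - x) := by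
    rw [intervalIntegral.integral_comp_sub_left (fun x => gaussianPDFReal 0 1 x) (2 * lam)]
    congr 1 <;> ring
  have h4 : ∫ x in (lam + A)..(lam + a), gaussianPDFReal 0 1 x
      ≤ ∫ x in (lam + A)..(lam + a), gaussianPDFReal 0 1 (2 * lam - x) := by
    apply intervalIntegral.integral_mono_on (by linarith)
    · exact (integrable_gaussianPDFReal 0 1).intervalIntegrable
    · apply Continuous.intervalIntegrable
      have : Continuous (gaussianPDFReal 0 1) := by
        rw [gaussianPDFReal_def]; fun_prop
      fun_prop
    · intro x hx
      simp only [Set.mem_Icc] at hx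
      simp only [gaussianPDFReal, sub_zero, NNReal.coe_one]
      apply mul_le_mul_of_nonneg_left _ (by positivity)
      apply Real.exp_le_exp.2
      have : (2 * lam - x)^2 ≤ x^2 := by nlinarith [hx.1]
      nlinarith [this]
  linarith [h1, h2, h3 ▸ h4]

-- per-m tail bound for the scaled gaussian
lemma per_m_bound (n : ℕ) (hn : 1 ≤ n) {lam q m : ℝ} (hlam : 0 ≤ lam) (hq : q ∈ Set.Ico (0:ℝ) 1)
    (hm : (n : ℝ) * (1 - q) ≤ m) :
    ENNReal.ofReal (2 - Phi (lam - (1 - q) * Real.sqrt n) - Phi (lam + (1 - q) * Real.sqrt n)) ≤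
      gaussianReal 0 (n : ℝ≥0) {s : ℝ | Real.sqrt n * lam < |m + s|} := by
  have hn0 : (0:ℝ) < n := by exact_mod_cast hn
  have hsq : (0:ℝ) < Real.sqrt n := Real.sqrt_pos.2 hn0
  have hsqsq : Real.sqrt n * Real.sqrt n = n := Real.mul_self_sqrt hn0.le
  set c := Real.sqrt n * lam with hc
  have hc0 : 0 ≤ c := mul_nonneg hsq.le hlam
  set a := m / Real.sqrt n with ha
  have hm0 : 0 ≤ m := le_trans (by nlinarith [hq.2, hq.1]) hm
  have hA : (0:ℝ) ≤ (1 - q) * Real.sqrt n := mul_nonneg (by linarith [hq.2]) hsq.le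
  have hAa : (1 - q) * Real.sqrt n ≤ a := by
    rw [ha, le_div_iff₀ hsq]
    nlinarith [hm]
  -- identify the scaled gaussian
  have hmap : gaussianReal 0 (n : ℝ≥0) = (gaussianReal 0 1).map (Real.sqrt n * ·) := by
    rw [gaussianReal_map_const_mul]
    congr 1
    · ring
    · ext
      push_cast
      simp [Real.sq_sqrt hn0.le]
  have hmeas_mul : Measurable fun x : ℝ => Real.sqrt n * x := by fun_prop
  have hUpre : (fun x : ℝ => Real.sqrt n * x) ⁻¹' Set.Ioi (c - m) = Set.Ioi ((c - m) / Real.sqrt n) := by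
    ext x; simp [Set.mem_preimage, div_lt_iff₀ hsq, mul_comm]
  have hVpre : (fun x : ℝ => Real.sqrt n * x) ⁻¹' Set.Iio (-c - m) = Set.Iio ((-c - m) / Real.sqrt n) := by
    ext x; simp [Set.mem_preimage, lt_div_iff₀ hsq, mul_comm]
  have hU : gaussianReal 0 (n : ℝ≥0) (Set.Ioi (c - m)) = ENNReal.ofReal (1 - Phi (lam - a)) := by
    rw [hmap, Measure.map_apply hmeas_mul measurableSet_Ioi, hUpre, gauss_Ioi]
    congr 2
    rw [hc, ha]
    field_simp
  have hV : gaussianReal 0 (n : ℝ≥0) (Set.Iio (-c - m)) = ENNReal.ofReal (1 - Phi (lam + a)) := by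
    rw [hmap, Measure.map_apply hmeas_mul measurableSet_Iio, hVpre, gauss_Iio]
    have : (-c - m) / Real.sqrt n = -(lam + a) := by
      rw [hc, ha]; field_simp; ring
    rw [this, Phi_neg]
  have hsub : Set.Ioi (c - m) ∪ Set.Iio (-c - m) ⊆ {s : ℝ | c < |m + s|} := by
    intro x hx
    rcases hx with hx | hx
    · simp only [Set.mem_Ioi] at hx
      have : c < m + x := by linarith
      simp only [Set.mem_setOf_eq]
      rw [abs_of_pos (by linarith)]
      exact this
    · simp only [Set.mem_Iio] at hx
      have : m + x < -c := by linarith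
      simp only [Set.mem_setOf_eq]
      rw [abs_of_neg (by linarith)]
      linarith
  have hdisj : Disjoint (Set.Ioi (c - m)) (Set.Iio (-c - m)) := by
    rw [Set.disjoint_left]
    intro x hx hx'
    simp only [Set.mem_Ioi, Set.mem_Iio] at hx hx'
    linarith
  calc ENNReal.ofReal (2 - Phi (lam - (1 - q) * Real.sqrt n) - Phi (lam + (1 - q) * Real.sqrt n))
      ≤ ENNReal.ofReal (2 - Phi (lam - a) - Phi (lam + a)) := by
        apply ENNReal.ofReal_le_ofReal
        have := key_phi_ineq hlam hA hAa
        linarith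
    _ = ENNReal.ofReal ((1 - Phi (lam - a)) + (1 - Phi (lam + a))) := by ring_nf
    _ ≤ ENNReal.ofReal (1 - Phi (lam - a)) + ENNReal.ofReal (1 - Phi (lam + a)) :=
        ENNReal.ofReal_add_le
    _ = gaussianReal 0 (n : ℝ≥0) (Set.Ioi (c - m) ∪ Set.Iio (-c - m)) := by
        rw [measure_union hdisj measurableSet_Iio, hU, hV]
    _ ≤ gaussianReal 0 (n : ℝ≥0) {s : ℝ | c < |m + s|} := measure_mono hsub

/-- lower bound on the detection probability of the RDT decision. -/
theorem stmt10 {Ω : Type*} [MeasurableSpace Ω] (P : Measure Ω) [IsProbabilityMeasure P]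
    (γ q τ : ℝ) (hγ : γ ∈ Set.Ioo (0 : ℝ) 1) (hq : q ∈ Set.Ico (0 : ℝ) 1) (hτ : 0 ≤ τ)
    (n : ℕ) (hn : 1 ≤ n)
    (X : Fin n → Ω → ℝ) (hmeas : ∀ i, Measurable (X i))
    (hindep : iIndepFun X P)
    (hdist : ∀ i, Measure.map (X i) P = gaussianReal 0 1)
    (Δ : Ω → Fin n → ℝ) (hΔmeas : Measurable Δ)
    (hΔX : IndepFun Δ (fun ω i => X i ω) P)
    (hΔbnd : ∀ i, ∀ᵐ ω ∂P, |Δ ω i| ≤ q)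
    (lam : ℝ)
    (hlam : 2 - Phi (lam - τ * Real.sqrt n) - Phi (lam + τ * Real.sqrt n) = γ) :
    ENNReal.ofReal
        (2 - Phi (lam - (1 - q) * Real.sqrt n) - Phi (lam + (1 - q) * Real.sqrt n)) ≤
      P {ω | Real.sqrt n * lam < |∑ i, (1 + Δ ω i + X i ω)|} := by
  have hn0 : (0:ℝ) < n := by exact_mod_cast hn
  -- lam is nonnegative
  have hlam0 : 0 ≤ lam := by
    by_contra hneg
    push_neg at hneg
    set b := τ * Real.sqrt n with hb
    have hb0 : 0 ≤ b := mul_nonneg hτ (Real.sqrt_nonneg _)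
    have h1 : Phi (lam - b) ≤ Phi (-b) := Phi_mono (by linarith)
    have h2 : Phi (lam + b) ≤ Phi b := Phi_mono (by linarith)
    have h3 : Phi (-b) = 1 - Phi b := Phi_neg b
    have := hγ.2
    linarith
  -- the two random variables
  set S : Ω → ℝ := fun ω => ∑ i, X i ω with hSdef
  set M : Ω → ℝ := fun ω => ∑ i, (1 + Δ ω i) with hMdef
  have hSmeas : Measurable S := by
    apply Finset.measurable_sum
    exact fun i _ => hmeas i
  have hMmeas : Measurable M := by
    apply Finset.measurable_sum
    exact fun i _ => measurable_const.add ((measurable_pi_apply i).comp hΔmeas)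
  have hS : Measure.map S P = gaussianReal 0 (n : ℝ≥0) := by
    have := sum_iid_gauss P X hmeas hindep hdist Finset.univ
    simpa using this
  -- independence of M and S
  have hMS : IndepFun M S P := by
    have h := hΔX.comp (φ := fun d : Fin n → ℝ => ∑ i, (1 + d i))
      (ψ := fun f : Fin n → ℝ => ∑ i, f i)
      (by apply Finset.measurable_sum; exact fun i _ => measurable_const.add (measurable_pi_apply i))
      (by apply Finset.measurable_sum; exact fun i _ => measurable_pi_apply i)
    exact h
  -- rewrite the event
  have hev : {ω | Real.sqrt n * lam < |∑ i, (1 + Δ ω i + X i ω)|}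
      = {ω | Real.sqrt n * lam < |M ω + S ω|} := by
    ext ω
    simp only [Set.mem_setOf_eq, hMdef, hSdef]
    rw [← Finset.sum_add_distrib]
  rw [hev]
  set c := Real.sqrt n * lam with hc
  have hB : MeasurableSet {p : ℝ × ℝ | c < |p.1 + p.2|} := by
    apply measurableSet_lt measurable_const
    exact (measurable_fst.add measurable_snd).abs
  have hjoint : Measure.map (fun ω => (M ω, S ω)) P
      = (Measure.map M P).prod (gaussianReal 0 (n : ℝ≥0)) := by
    rw [← hS]
    exact (indepFun_iff_map_prod_eq_prod_map_map hMmeas.aemeasurable hSmeas.aemeasurable).1 hMS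
  have hPE : P {ω | c < |M ω + S ω|}
      = ∫⁻ m, gaussianReal 0 (n : ℝ≥0) {s : ℝ | c < |m + s|} ∂(Measure.map M P) := by
    have h0 : {ω | c < |M ω + S ω|} = (fun ω => (M ω, S ω)) ⁻¹' {p : ℝ × ℝ | c < |p.1 + p.2|} := rfl
    rw [h0, ← Measure.map_apply (hMmeas.prodMk hSmeas) hB, hjoint, Measure.prod_apply hB]
    rfl
  rw [hPE]
  haveI : IsProbabilityMeasure (Measure.map M P) := Measure.isProbabilityMeasure_map hMmeas.aemeasurable
  -- a.e. bound on M
  have haeM : ∀ᵐ m ∂(Measure.map M P), (n : ℝ) * (1 - q) ≤ m := by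
    rw [ae_map_iff hMmeas.aemeasurable (measurableSet_Ici (a := (n:ℝ) * (1 - q)))]
    have hall : ∀ᵐ ω ∂P, ∀ i, |Δ ω i| ≤ q := (ae_all_iff).2 hΔbnd
    filter_upwards [hall] with ω hω
    have : (n : ℝ) * (1 - q) = ∑ _i : Fin n, (1 - q) := by
      simp [Finset.sum_const, Finset.card_univ]
      ring
    simp only [Set.mem_Ici, hMdef]
    rw [this]
    apply Finset.sum_le_sum
    intro i _
    have := abs_le.1 (hω i)
    linarith [this.1]
  calc ENNReal.ofReal (2 - Phi (lam - (1 - q) * Real.sqrt n) - Phi (lam + (1 - q) * Real.sqrt n))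
      = ∫⁻ _, ENNReal.ofReal (2 - Phi (lam - (1 - q) * Real.sqrt n)
          - Phi (lam + (1 - q) * Real.sqrt n)) ∂(Measure.map M P) := by
        rw [lintegral_const, measure_univ, mul_one]
    _ ≤ ∫⁻ m, gaussianReal 0 (n : ℝ≥0) {s : ℝ | c < |m + s|} ∂(Measure.map M P) := by
        apply lintegral_mono_ae
        filter_upwards [haeM] with m hm
        exact per_m_bound n hn hlam0 hq hm
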